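/- Let w be a weight on ℝⁿ and suppose there exist constants B, β ≥ 1 and γ > 0 such that the weighted sharp Tauberian constant of the strong maximal operator satisfies C_S^w(α) - 1 ≤ B (1-α)^{1/β} for all α with 1 - e^{-γ} < α < 1. Then for every axis-parallel rectangular parallelepiped R ⊆ ℝⁿ and every measurable E ⊆ R, w(E)/w(R) ≤ max(B, e^{γ/β}) · (|E|/|R|)^{1/β}. -/

import Mathlib

open MeasureTheory Set Filter
open scoped ENNReal NNReal Topology

/-- The open axis-parallel rectangle (rectangular parallelepiped) determined by `a` and `b`. -/
def rect {n : ℕ} (a b : Fin n → ℝ) : Set (Fin n → ℝ) :=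
  Set.univ.pi fun i => Set.Ioo (a i) (b i)

/-- The strong maximal operator on `ℝⁿ` over axis-parallel rectangles. -/
noncomputable def MS {n : ℕ} (f : (Fin n → ℝ) → ℝ) (x : Fin n → ℝ) : ℝ :=
  sSup {r : ℝ | ∃ a b : Fin n → ℝ, (∀ i, x i ∈ Set.Ioo (a i) (b i)) ∧
    r = (volume (rect a b)).toReal⁻¹ * ∫ y in rect a b, |f y|}

/-- The `w`-measure of a set: `w(S) = ∫_S w`. -/
noncomputable def wInt {n : ℕ} (w : (Fin n → ℝ) → ℝ) (S : Set (Fin n → ℝ)) : ℝ≥0∞ :=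
  ∫⁻ x in S, ENNReal.ofReal (w x)

/-- The weighted sharp Tauberian constant of the strong maximal operator. -/
noncomputable def CSw {n : ℕ} (w : (Fin n → ℝ) → ℝ) (α : ℝ) : ℝ≥0∞ :=
  ⨆ (E : Set (Fin n → ℝ)) (_ : MeasurableSet E) (_ : 0 < wInt w E) (_ : wInt w E < ⊤),
    wInt w {x | α < MS (E.indicator 1) x} / wInt w E

lemma measurableSet_rect {n : ℕ} (a b : Fin n → ℝ) : MeasurableSet (rect a b) :=
  MeasurableSet.univ_pi fun _ => measurableSet_Ioo

lemma volume_rect {n : ℕ} (a b : Fin n → ℝ) :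
    volume (rect a b) = ∏ i, ENNReal.ofReal (b i - a i) := by
  rw [rect, volume_pi_pi]; simp [Real.volume_Ioo]

lemma volume_rect_pos {n : ℕ} {a b : Fin n → ℝ} (hab : ∀ i, a i < b i) :
    0 < volume (rect a b) := by
  rw [volume_rect]
  refine pos_iff_ne_zero.2 (Finset.prod_ne_zero_iff.2 fun i _ => ?_)
  simpa using sub_pos.2 (hab i)

lemma volume_rect_lt_top {n : ℕ} (a b : Fin n → ℝ) : volume (rect a b) < ⊤ := by
  rw [volume_rect]
  exact ENNReal.prod_lt_top fun i _ => ENNReal.ofReal_lt_top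

lemma rect_subset_Icc {n : ℕ} (a b : Fin n → ℝ) : rect a b ⊆ Set.Icc a b := by
  rw [← Set.pi_univ_Icc]
  exact Set.pi_mono fun i _ => Set.Ioo_subset_Icc_self

lemma integral_abs_indicator {n : ℕ} {E : Set (Fin n → ℝ)} (hE : MeasurableSet E)
    (S : Set (Fin n → ℝ)) :
    ∫ y in S, |E.indicator 1 y| = (volume (S ∩ E)).toReal := by
  have h1 : ∀ y : Fin n → ℝ, |E.indicator (1 : (Fin n → ℝ) → ℝ) y| = E.indicator 1 y := fun y =>
    abs_of_nonneg (Set.indicator_nonneg (fun _ _ => zero_le_one) y)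
  simp only [h1]
  rw [setIntegral_indicator hE]
  simpa [Measure.real] using setIntegral_const (μ := volume.restrict (S ∩ E)) (1 : ℝ)

lemma MS_indicator_lower {n : ℕ} {E : Set (Fin n → ℝ)} (hE : MeasurableSet E)
    {a b : Fin n → ℝ} {x : Fin n → ℝ} (hx : x ∈ rect a b) :
    (volume (rect a b)).toReal⁻¹ * (volume (rect a b ∩ E)).toReal
      ≤ MS (E.indicator 1) x := by
  have hxm : ∀ i, x i ∈ Set.Ioo (a i) (b i) := fun i => hx i (mem_univ i)
  refine le_csSup ?_ ?_
  · refine ⟨1, fun r hr => ?_⟩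
    obtain ⟨a', b', hx', rfl⟩ := hr
    have hab' : ∀ i, a' i < b' i := fun i => lt_trans (hx' i).1 (hx' i).2
    have hpos : 0 < (volume (rect a' b')).toReal :=
      ENNReal.toReal_pos (volume_rect_pos hab').ne' (volume_rect_lt_top a' b').ne
    rw [integral_abs_indicator hE]
    have hle : (volume (rect a' b' ∩ E)).toReal ≤ (volume (rect a' b')).toReal :=
      ENNReal.toReal_mono (volume_rect_lt_top a' b').ne (measure_mono inter_subset_left)
    calc (volume (rect a' b')).toReal⁻¹ * (volume (rect a' b' ∩ E)).toReal
        ≤ (volume (rect a' b')).toReal⁻¹ * (volume (rect a' b')).toReal :=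
          mul_le_mul_of_nonneg_left hle (inv_nonneg.2 hpos.le)
      _ = 1 := inv_mul_cancel₀ hpos.ne'
  · exact ⟨a, b, hxm, by rw [integral_abs_indicator hE]⟩

lemma wInt_mono {n : ℕ} (w : (Fin n → ℝ) → ℝ) {S T : Set (Fin n → ℝ)} (h : S ⊆ T) :
    wInt w S ≤ wInt w T := lintegral_mono_set h

lemma wInt_rect_lt_top {n : ℕ} {w : (Fin n → ℝ) → ℝ} (hloc : LocallyIntegrable w volume)
    (a b : Fin n → ℝ) : wInt w (rect a b) < ⊤ := by
  have h1 : IntegrableOn w (Set.Icc a b) volume :=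
    hloc.integrableOn_isCompact isCompact_Icc
  calc wInt w (rect a b) ≤ wInt w (Set.Icc a b) := wInt_mono w (rect_subset_Icc a b)
    _ < ⊤ := h1.setLIntegral_lt_top

lemma wInt_null {n : ℕ} (w : (Fin n → ℝ) → ℝ) {S : Set (Fin n → ℝ)} (hS : volume S = 0) :
    wInt w S = 0 := setLIntegral_measure_zero S _ hS

lemma wInt_union {n : ℕ} (w : (Fin n → ℝ) → ℝ) {S T : Set (Fin n → ℝ)}
    (hT : MeasurableSet T) (hd : Disjoint S T) :
    wInt w (S ∪ T) = wInt w S + wInt w T := lintegral_union hT hd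

lemma wInt_union_le {n : ℕ} (w : (Fin n → ℝ) → ℝ) (S T : Set (Fin n → ℝ)) :
    wInt w (S ∪ T) ≤ wInt w S + wInt w T := lintegral_union_le _ _ _

lemma wInt_eq_mu {n : ℕ} (w : (Fin n → ℝ) → ℝ) {S : Set (Fin n → ℝ)} (hS : MeasurableSet S) :
    wInt w S = volume.withDensity (fun x => ENNReal.ofReal (w x)) S :=
  (withDensity_apply _ hS).symm

lemma CSw_ge {n : ℕ} (w : (Fin n → ℝ) → ℝ) (α : ℝ) {G : Set (Fin n → ℝ)}
    (hG : MeasurableSet G) (h0 : 0 < wInt w G) (htop : wInt w G < ⊤) :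
    wInt w {x | α < MS (G.indicator 1) x} / wInt w G ≤ CSw w α :=
  le_iSup_of_le G (le_iSup_of_le hG (le_iSup_of_le h0 (le_iSup_of_le htop le_rfl)))

lemma exists_small_subset {n : ℕ} (hn : 0 < n) (w : (Fin n → ℝ) → ℝ)
    {a b : Fin n → ℝ} {E : Set (Fin n → ℝ)} (hE : MeasurableSet E) (hEsub : E ⊆ rect a b)
    (h0 : 0 < wInt w E) (hfin : wInt w E < ⊤) {ε : ℝ≥0∞} (hε : 0 < ε) :
    ∃ A : Set (Fin n → ℝ), A ⊆ E ∧ MeasurableSet A ∧ 0 < wInt w A ∧ wInt w A < ε := by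
  set μ := volume.withDensity (fun x => ENNReal.ofReal (w x)) with hμ
  set i0 : Fin n := ⟨0, hn⟩ with hi0
  set A : ℝ → Set (Fin n → ℝ) := fun q => E ∩ {x | x i0 ≤ q} with hA
  have hAmeas : ∀ q, MeasurableSet (A q) := fun q =>
    hE.inter ((measurable_pi_apply i0) measurableSet_Iic)
  have hAmono : ∀ {q q' : ℝ}, q ≤ q' → A q ⊆ A q' := fun h =>
    inter_subset_inter_right _ fun x hx => le_trans hx h
  have hAE : ∀ q, A q ⊆ E := fun q => inter_subset_left
  have hμE : μ E = wInt w E := (wInt_eq_mu w hE).symm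
  set S : Set ℝ := {q | 0 < μ (A q)} with hS
  have hSne : (b i0) ∈ S := by
    have : A (b i0) = E := by
      refine inter_eq_self_of_subset_left fun x hx => ?_
      exact le_of_lt ((hEsub hx) i0 (mem_univ i0)).2
    simpa [hS, this, hμE] using h0
  have hSbd : BddBelow S := by
    refine ⟨a i0, fun q hq => ?_⟩
    obtain ⟨x, hxE, hxq⟩ := nonempty_of_measure_ne_zero hq.ne'
    exact le_trans (le_of_lt ((hEsub hxE) i0 (mem_univ i0)).1) hxq
  set s : ℝ := sInf S with hs
  have hpos : ∀ q, s < q → 0 < μ (A q) := by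
    intro q hq
    obtain ⟨q', hq'S, hq'⟩ := (csInf_lt_iff hSbd ⟨_, hSne⟩).1 hq
    exact lt_of_lt_of_le hq'S (measure_mono (hAmono hq'.le))
  have hzero : ∀ q, q < s → μ (A q) = 0 := by
    intro q hq
    by_contra h
    exact absurd (csInf_le hSbd (show q ∈ S from pos_iff_ne_zero.2 h)) (not_le.2 hq)
  -- the intersection has measure zero
  have hAs : μ (A s) = 0 := by
    have hms : MeasurableSet {x : Fin n → ℝ | x i0 = s} :=
      measurableSet_eq_fun (measurable_pi_apply i0) measurable_const
    have h1 : μ {x : Fin n → ℝ | x i0 = s} = 0 := by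
      have hv : volume {x : Fin n → ℝ | x i0 = s} = 0 := by
        rw [volume_pi]
        exact Measure.pi_hyperplane (fun _ => (volume : Measure ℝ)) i0 s
      rw [hμ, ← wInt_eq_mu w hms]
      exact setLIntegral_measure_zero _ _ hv
    have h2 : μ (E ∩ {x | x i0 < s}) = 0 := by
      have hsub : E ∩ {x | x i0 < s} ⊆ ⋃ k : ℕ, A (s - 1 / (k + 1)) := by
        rintro x ⟨hxE, hxs⟩
        obtain ⟨k, hk⟩ := exists_nat_one_div_lt (sub_pos.2 (show x i0 < s from hxs))
        exact mem_iUnion.2 ⟨k, hxE, show x i0 ≤ s - 1 / (k + 1) from by linarith⟩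
      refine measure_mono_null hsub (measure_iUnion_null fun k => hzero _ ?_)
      have : (0:ℝ) < 1 / ((k:ℝ) + 1) := by positivity
      linarith
    have hsub : A s ⊆ (E ∩ {x | x i0 < s}) ∪ {x | x i0 = s} := by
      rintro x ⟨hxE, hxs⟩
      rcases lt_or_eq_of_le (show x i0 ≤ s from hxs) with h | h
      · exact Or.inl ⟨hxE, h⟩
      · exact Or.inr h
    exact measure_mono_null hsub (measure_union_null h2 h1)
  -- continuity from above
  set Ak : ℕ → Set (Fin n → ℝ) := fun k => A (s + 1 / (k + 1)) with hAk
  have hInter : (⋂ k : ℕ, Ak k) = A s := by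
    ext x
    simp only [hAk, mem_iInter, hA, mem_inter_iff, mem_setOf_eq]
    constructor
    · rintro h
      refine ⟨(h 0).1, ?_⟩
      by_contra hc
      push_neg at hc
      obtain ⟨k, hk⟩ := exists_nat_one_div_lt (sub_pos.2 hc)
      have := (h k).2
      linarith
    · rintro ⟨hxE, hxs⟩ k
      have : (0:ℝ) < 1 / ((k:ℝ) + 1) := by positivity
      exact ⟨hxE, by linarith⟩
  have hanti : Antitone Ak := by
    intro k l hkl
    refine hAmono (add_le_add_right ?_ s)
    apply one_div_le_one_div_of_le (by positivity)
    have : (k:ℝ) ≤ (l:ℝ) := Nat.cast_le.2 hkl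
    linarith
  have hfin' : ∃ k : ℕ, μ (Ak k) ≠ ⊤ :=
    ⟨0, (lt_of_le_of_lt (le_trans (measure_mono (hAE _)) hμE.le) hfin).ne⟩
  have hlim : Tendsto (fun k : ℕ => μ (Ak k)) atTop (𝓝 0) := by
    have := tendsto_measure_iInter_atTop (μ := μ) (s := Ak)
      (fun k => (hAmeas _).nullMeasurableSet) hanti hfin'
    rw [hInter, hAs] at this
    exact this
  obtain ⟨k, hk⟩ := (hlim.eventually (Iio_mem_nhds hε)).exists
  have hsk : (0:ℝ) < 1 / ((k:ℝ) + 1) := by positivity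
  refine ⟨Ak k, hAE _, hAmeas _, ?_, ?_⟩
  · rw [wInt_eq_mu w (hAmeas _)]
    exact hpos _ (by linarith)
  · rw [wInt_eq_mu w (hAmeas _)]
    exact hk

/-- a weighted Solyanik estimate for the strong maximal operator implies
the absorption property on rectangles. -/
theorem stmt7 {n : ℕ} (w : (Fin n → ℝ) → ℝ) (hw : ∀ x, 0 ≤ w x) (hmeas : Measurable w)
    (hloc : LocallyIntegrable w volume)
    (B β γ : ℝ) (hB : 1 ≤ B) (hβ : 1 ≤ β) (hγ : 0 < γ)
    (htaub : ∀ α : ℝ, 1 - Real.exp (-γ) < α → α < 1 →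
      CSw w α - 1 ≤ ENNReal.ofReal (B * (1 - α) ^ (1 / β))) :
    ∀ a b : Fin n → ℝ, (∀ i, a i < b i) → ∀ E ⊆ rect a b, MeasurableSet E →
      wInt w E ≤
        ENNReal.ofReal (max B (Real.exp (γ / β)) *
          ((volume E).toReal / (volume (rect a b)).toReal) ^ (1 / β)) *
        wInt w (rect a b) := by
  intro a b hab E hEsub hE
  have hβ0 : 0 < 1 / β := by positivity
  set R := rect a b with hRdef
  have hRmeas : MeasurableSet R := measurableSet_rect a b
  have hvRpos : 0 < volume R := volume_rect_pos hab
  have hvRtop : volume R < ⊤ := volume_rect_lt_top a b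
  have hvE_le : volume E ≤ volume R := measure_mono hEsub
  have hvEtop : volume E < ⊤ := lt_of_le_of_lt hvE_le hvRtop
  have hrRpos : 0 < (volume R).toReal := ENNReal.toReal_pos hvRpos.ne' hvRtop.ne
  set t : ℝ := (volume E).toReal / (volume R).toReal with ht
  have ht0 : 0 ≤ t := div_nonneg ENNReal.toReal_nonneg hrRpos.le
  have hwR_top : wInt w R < ⊤ := wInt_rect_lt_top hloc a b
  have hwE_le : wInt w E ≤ wInt w R := wInt_mono w hEsub
  have htpow0 : 0 ≤ t ^ (1/β) := Real.rpow_nonneg ht0 _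
  by_cases hcase : Real.exp (-γ) ≤ t
  · -- trivial case: the coefficient is at least 1
    have h1 : Real.exp (-γ) ^ (1/β) ≤ t ^ (1/β) :=
      Real.rpow_le_rpow (Real.exp_pos _).le hcase hβ0.le
    have h2 : Real.exp (γ/β) * Real.exp (-γ) ^ (1/β) = 1 := by
      rw [← Real.exp_mul, ← Real.exp_add]
      rw [show γ / β + -γ * (1 / β) = 0 by field_simp; ring]
      exact Real.exp_zero
    have hcoef : 1 ≤ max B (Real.exp (γ / β)) * t ^ (1 / β) := by
      calc (1:ℝ) = Real.exp (γ/β) * Real.exp (-γ) ^ (1/β) := h2.symm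
        _ ≤ Real.exp (γ/β) * t ^ (1/β) :=
            mul_le_mul_of_nonneg_left h1 (Real.exp_pos _).le
        _ ≤ max B (Real.exp (γ / β)) * t ^ (1/β) :=
            mul_le_mul_of_nonneg_right (le_max_right _ _) htpow0
    calc wInt w E ≤ wInt w R := hwE_le
      _ = 1 * wInt w R := (one_mul _).symm
      _ ≤ ENNReal.ofReal (max B (Real.exp (γ / β)) * t ^ (1 / β)) * wInt w R := by
          gcongr
          rw [← ENNReal.ofReal_one]
          exact ENNReal.ofReal_le_ofReal hcoef
  · push_neg at hcase
    by_cases hwE0 : wInt w E = 0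
    · simp [hwE0]
    have hwEpos : 0 < wInt w E := pos_iff_ne_zero.2 hwE0
    have hwRpos : 0 < wInt w R := lt_of_lt_of_le hwEpos hwE_le
    have hwE_top : wInt w E < ⊤ := lt_of_le_of_lt hwE_le hwR_top
    set F := R \ E with hF
    have hFmeas : MeasurableSet F := hRmeas.diff hE
    have hFsub : F ⊆ R := diff_subset
    have hwF_le : wInt w F ≤ wInt w R := wInt_mono w hFsub
    have hwF_top : wInt w F < ⊤ := lt_of_le_of_lt hwF_le hwR_top
    have hwRsplit : wInt w R = wInt w E + wInt w F := by
      rw [← wInt_union w hFmeas disjoint_sdiff_right, union_diff_cancel hEsub]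
    have hvF : volume F = volume R - volume E :=
      measure_diff hEsub hE.nullMeasurableSet hvEtop.ne
    have hvFtoReal : (volume F).toReal = (volume R).toReal - (volume E).toReal := by
      rw [hvF, ENNReal.toReal_sub_of_le hvE_le hvRtop.ne]
    -- lower bound for MS of indicators of sets between F and R, on R
    have hMS : ∀ G : Set (Fin n → ℝ), MeasurableSet G → F ⊆ G → ∀ x ∈ R,
        1 - t ≤ MS (G.indicator 1) x := by
      intro G hGmeas hFG x hx
      have h := MS_indicator_lower hGmeas (a := a) (b := b) hx
      refine le_trans ?_ h
      have hle : (volume F).toReal ≤ (volume (rect a b ∩ G)).toReal := by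
        apply ENNReal.toReal_mono (lt_of_le_of_lt (measure_mono inter_subset_left) hvRtop).ne
        exact measure_mono fun y hy => ⟨hFsub hy, hFG hy⟩
      calc 1 - t = (volume R).toReal⁻¹ * (volume F).toReal := by
            rw [hvFtoReal, ht]; field_simp
        _ ≤ (volume (rect a b)).toReal⁻¹ * (volume (rect a b ∩ G)).toReal :=
            mul_le_mul_of_nonneg_left hle (inv_nonneg.2 hrRpos.le)
    -- the key estimate for each s' slightly above t
    have hkey : ∀ s' : ℝ, t < s' → s' < Real.exp (-γ) →
        wInt w E ≤ ENNReal.ofReal (B * s' ^ (1/β)) * wInt w R := by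
      intro s' hts hse
      set α : ℝ := 1 - s' with hα
      have hα1 : α < 1 := by
        have : 0 < s' := lt_of_le_of_lt ht0 hts
        simp only [hα]; linarith
      have hα2 : 1 - Real.exp (-γ) < α := by simp only [hα]; linarith
      set D : ℝ≥0∞ := ENNReal.ofReal (B * s' ^ (1/β)) with hD
      have hCle : CSw w α ≤ 1 + D := by
        calc CSw w α ≤ CSw w α - 1 + 1 := le_tsub_add
          _ ≤ ENNReal.ofReal (B * (1 - α) ^ (1 / β)) + 1 :=
              add_le_add_left (htaub α hα2 hα1) 1
          _ = 1 + D := by rw [hD, hα]; ring_nf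
      have hRα : ∀ G : Set (Fin n → ℝ), MeasurableSet G → F ⊆ G →
          R ⊆ {x | α < MS (G.indicator 1) x} := by
        intro G hGmeas hFG x hx
        exact lt_of_lt_of_le (by simp only [hα]; linarith) (hMS G hGmeas hFG x hx)
      by_cases hwF0 : wInt w F = 0
      · -- impossible: w would have arbitrarily small positive mass sets inside E
        exfalso
        have hn : 0 < n := by
          by_contra hn0
          have hn0' : n = 0 := Nat.eq_zero_of_le_zero (not_lt.1 hn0)
          subst hn0'
          have hsing : Subsingleton (Fin 0 → ℝ) :=
            ⟨fun f g => funext fun i => i.elim0⟩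
          obtain ⟨x, hx⟩ : E.Nonempty :=
            nonempty_iff_ne_empty.2 fun hemp => hwE0 (by rw [hemp, wInt]; simp)
          have hvFpos : 0 < volume F := by
            rw [hvF]
            refine tsub_pos_iff_lt.2 ?_
            refine lt_of_le_of_ne hvE_le fun hEq => ?_
            have : t = 1 := by rw [ht, hEq, div_self hrRpos.ne']
            rw [this] at hcase
            exact absurd hcase (not_lt.2 (Real.exp_le_one_iff.2 (by linarith)))
          obtain ⟨y, hy⟩ := nonempty_of_measure_ne_zero hvFpos.ne'
          exact hy.2 (hsing.allEq y x ▸ hx)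
        set K : ℝ≥0∞ := 1 + D with hK
        have hKtop : K ≠ ⊤ := by
          rw [hK]; exact ENNReal.add_ne_top.2 ⟨ENNReal.one_ne_top, ENNReal.ofReal_ne_top⟩
        have hK0 : K ≠ 0 := by
          rw [hK]; exact (lt_of_lt_of_le one_pos le_self_add).ne'
        set ε : ℝ≥0∞ := wInt w R / 2 / K with hε
        have hεpos : 0 < ε := by
          refine ENNReal.div_pos ?_ hKtop
          exact (ENNReal.div_pos hwRpos.ne' ENNReal.ofNat_ne_top).ne'
        obtain ⟨A, hAE, hAmeas, hA0, hAε⟩ :=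
          exists_small_subset hn w hE hEsub hwEpos hwE_top hεpos
        set G := F ∪ A with hG
        have hGmeas : MeasurableSet G := hFmeas.union hAmeas
        have hFG : F ⊆ G := subset_union_left
        have hwG_le : wInt w G ≤ wInt w A := by
          calc wInt w G ≤ wInt w F + wInt w A := wInt_union_le w F A
            _ = wInt w A := by rw [hwF0, zero_add]
        have hwGpos : 0 < wInt w G := lt_of_lt_of_le hA0 (wInt_mono w subset_union_right)
        have hwGtop : wInt w G < ⊤ := lt_of_le_of_lt hwG_le (lt_of_lt_of_le hAε le_top)
        have hdiv : wInt w {x | α < MS (G.indicator 1) x} / wInt w G ≤ K :=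
          le_trans (CSw_ge w α hGmeas hwGpos hwGtop) hCle
        have h1 : wInt w R ≤ K * wInt w G := by
          calc wInt w R ≤ wInt w {x | α < MS (G.indicator 1) x} :=
              wInt_mono w (hRα G hGmeas hFG)
            _ ≤ K * wInt w G := (ENNReal.div_le_iff hwGpos.ne' hwGtop.ne).1 hdiv
        have h2 : K * wInt w G < wInt w R := by
          calc K * wInt w G ≤ K * ε := mul_le_mul_right (le_trans hwG_le hAε.le) K
            _ ≤ wInt w R / 2 := ENNReal.mul_div_le
            _ < wInt w R := ENNReal.half_lt_self hwRpos.ne' hwR_top.ne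
        exact absurd (lt_of_le_of_lt h1 h2) (lt_irrefl _)
      · -- main case
        have hwFpos : 0 < wInt w F := pos_iff_ne_zero.2 hwF0
        have hdiv : wInt w {x | α < MS (F.indicator 1) x} / wInt w F ≤ 1 + D :=
          le_trans (CSw_ge w α hFmeas hwFpos hwF_top) hCle
        have h1 : wInt w R ≤ wInt w F + D * wInt w R := by
          calc wInt w R ≤ wInt w {x | α < MS (F.indicator 1) x} :=
              wInt_mono w (hRα F hFmeas subset_rfl)
            _ ≤ (1 + D) * wInt w F := (ENNReal.div_le_iff hwFpos.ne' hwF_top.ne).1 hdiv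
            _ = wInt w F + D * wInt w F := by rw [add_mul, one_mul]
            _ ≤ wInt w F + D * wInt w R := add_le_add_right (mul_le_mul_right hwF_le D) _
        have h2 : wInt w E + wInt w F ≤ D * wInt w R + wInt w F := by
          calc wInt w E + wInt w F = wInt w R := hwRsplit.symm
            _ ≤ wInt w F + D * wInt w R := h1
            _ = D * wInt w R + wInt w F := add_comm _ _
        exact (ENNReal.add_le_add_iff_right hwF_top.ne).1 h2
    -- pass to the limit s' → t⁺
    have hconv : Tendsto (fun s' : ℝ => ENNReal.ofReal (B * s' ^ (1/β)) * wInt w R)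
        (𝓝[>] t) (𝓝 (ENNReal.ofReal (B * t ^ (1/β)) * wInt w R)) := by
      refine ENNReal.Tendsto.mul_const ?_ (Or.inr hwR_top.ne)
      refine (ENNReal.continuous_ofReal.tendsto _).comp ?_
      refine Tendsto.mono_left ?_ nhdsWithin_le_nhds
      exact (continuousAt_const.mul
        (Real.continuousAt_rpow_const t (1/β) (Or.inr hβ0.le)))
    have hev : ∀ᶠ s' in 𝓝[>] t,
        wInt w E ≤ ENNReal.ofReal (B * s' ^ (1/β)) * wInt w R := by
      filter_upwards [Ioo_mem_nhdsGT_of_mem ⟨le_refl t, hcase⟩] with s' hs'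
      exact hkey s' hs'.1 hs'.2
    have hlim : wInt w E ≤ ENNReal.ofReal (B * t ^ (1/β)) * wInt w R :=
      ge_of_tendsto hconv hev
    refine le_trans hlim (mul_le_mul_left (ENNReal.ofReal_le_ofReal ?_) _)
    exact mul_le_mul_of_nonneg_right (le_max_left _ _) htpow0
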